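/- Let μ^1,...,μ^K : {1,...,T} → [0,1] be sequences of mean rewards and let V_j = Σ_{t=1}^{T-1} max_k |μ_{t+1}^k − μ_t^k| (where indices range over a contiguous interval I of length at most Δ, with μ extended constantly past its end). Let k_0 be an arm maximizing Σ_{t∈I} μ_t^k over k. Then Σ_{t∈I} (max_k μ_t^k − μ_t^{k_0}) ≤ 2·V_j·Δ. -/

import Mathlib

lemma telescope_abs (f : ℕ → ℝ) {s t : ℕ} (hst : s ≤ t) :
    |f t - f s| ≤ ∑ u ∈ Finset.Ico s t, |f (u+1) - f u| := by
  induction t, hst using Nat.le_induction with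
  | base => simp
  | succ n hn ih =>
    rw [Finset.sum_Ico_succ_top (by omega)]
    calc |f (n+1) - f s| ≤ |f n - f s| + |f (n+1) - f n| := by
          have := abs_add_le (f n - f s) (f (n+1) - f n); simpa [sub_add_sub_cancel'] using this
      _ ≤ _ := by linarith

/-- Over a contiguous interval `I = [a,b]` of at most `Δ` epochs, the cumulative
loss of the best static arm `k0` relative to the dynamic oracle is at most
`2·V_j·Δ`, where `V_j` is the total sup-norm variation of the mean rewards
within the interval (the term past the end of the interval vanishes since `μ`
is extended constantly). -/
theorem stmt_3 (K Δ a b : ℕ) [NeZero K] (hab : a ≤ b) (hlen : b + 1 - a ≤ Δ)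
    (μ : ℕ → Fin K → ℝ) (hμ : ∀ t k, μ t k ∈ Set.Icc (0:ℝ) 1)
    (k0 : Fin K)
    (hk0 : ∀ k, ∑ t ∈ Finset.Icc a b, μ t k ≤ ∑ t ∈ Finset.Icc a b, μ t k0) :
    ∑ t ∈ Finset.Icc a b,
        ((Finset.univ.sup' Finset.univ_nonempty fun k => μ t k) - μ t k0)
      ≤ 2 * (∑ t ∈ Finset.Ico a b,
          Finset.univ.sup' Finset.univ_nonempty fun k => |μ (t+1) k - μ t k|) * Δ := by
  set V : ℝ := ∑ t ∈ Finset.Ico a b,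
      Finset.univ.sup' Finset.univ_nonempty fun k => |μ (t+1) k - μ t k| with hV
  have hVnonneg : 0 ≤ V := by
    apply Finset.sum_nonneg
    intro t _
    exact le_trans (abs_nonneg (μ (t+1) k0 - μ t k0)) (Finset.le_sup' (fun k => |μ (t+1) k - μ t k|) (Finset.mem_univ k0))
  -- deviation bound within the interval
  have hdev : ∀ k, ∀ s ∈ Finset.Icc a b, ∀ t ∈ Finset.Icc a b, |μ t k - μ s k| ≤ V := by
    intro k s hs t ht
    wlog hst : s ≤ t generalizing s t
    · rw [abs_sub_comm]
      exact this t ht s hs (by omega)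
    calc |μ t k - μ s k| ≤ ∑ u ∈ Finset.Ico s t, |μ (u+1) k - μ u k| :=
          telescope_abs (fun u => μ u k) hst
      _ ≤ ∑ u ∈ Finset.Ico s t,
            Finset.univ.sup' Finset.univ_nonempty (fun k' => |μ (u+1) k' - μ u k'|) :=
          Finset.sum_le_sum fun u _ => Finset.le_sup' (fun k' => |μ (u+1) k' - μ u k'|) (Finset.mem_univ k)
      _ ≤ V := by
          apply Finset.sum_le_sum_of_subset_of_nonneg
          · exact Finset.Ico_subset_Ico (Finset.mem_Icc.mp hs).1 (Finset.mem_Icc.mp ht).2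
          · intro u _ _
            exact le_trans (abs_nonneg (μ (u+1) k0 - μ u k0)) (Finset.le_sup' (fun k' => |μ (u+1) k' - μ u k'|) (Finset.mem_univ k0))
  have hcard : (Finset.Icc a b).card = b + 1 - a := Nat.card_Icc a b
  have hn : 1 ≤ b + 1 - a := by omega
  -- pointwise gap bound
  have hpt : ∀ t0 ∈ Finset.Icc a b,
      (Finset.univ.sup' Finset.univ_nonempty fun k => μ t0 k) - μ t0 k0 ≤ 2 * V := by
    intro t0 ht0
    obtain ⟨k1, _, hk1⟩ := Finset.exists_mem_eq_sup' Finset.univ_nonempty (fun k => μ t0 k)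
    rw [hk1]
    have h1 : ((b + 1 - a : ℕ) : ℝ) * (μ t0 k1 - V) ≤ ∑ t ∈ Finset.Icc a b, μ t k1 := by
      have : ((b + 1 - a : ℕ) : ℝ) * (μ t0 k1 - V) = ∑ _t ∈ Finset.Icc a b, (μ t0 k1 - V) := by
        rw [Finset.sum_const, hcard, nsmul_eq_mul]
      rw [this]
      apply Finset.sum_le_sum
      intro t ht
      have := abs_le.mp (hdev k1 t0 ht0 t ht)
      linarith [this.1]
    have h2 : ∑ t ∈ Finset.Icc a b, μ t k0 ≤ ((b + 1 - a : ℕ) : ℝ) * (μ t0 k0 + V) := by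
      have : ((b + 1 - a : ℕ) : ℝ) * (μ t0 k0 + V) = ∑ _t ∈ Finset.Icc a b, (μ t0 k0 + V) := by
        rw [Finset.sum_const, hcard, nsmul_eq_mul]
      rw [this]
      apply Finset.sum_le_sum
      intro t ht
      have := abs_le.mp (hdev k0 t0 ht0 t ht)
      linarith [this.2]
    have h3 := le_trans h1 (le_trans (hk0 k1) h2)
    have hnpos : (0:ℝ) < ((b + 1 - a : ℕ) : ℝ) := by exact_mod_cast hn
    nlinarith
  calc ∑ t ∈ Finset.Icc a b,
        ((Finset.univ.sup' Finset.univ_nonempty fun k => μ t k) - μ t k0)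
      ≤ ∑ _t ∈ Finset.Icc a b, 2 * V := Finset.sum_le_sum hpt
    _ = ((b + 1 - a : ℕ) : ℝ) * (2 * V) := by rw [Finset.sum_const, hcard, nsmul_eq_mul]
    _ ≤ 2 * V * Δ := by
        have : ((b + 1 - a : ℕ) : ℝ) ≤ (Δ : ℝ) := by exact_mod_cast hlen
        nlinarith
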